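/- arXiv:2410.07179 — 2 statements merged into one kernel-verified Lean document; each statement's English description precedes it below -/
import Mathlib

section
/- For SL₂ over an algebraically closed field of characteristic p, with p-restricted dominant weights λ, μ ∈ {0,1,…,p-1} (identifying weights with ℕ), the tensor product L(λ) ⊗ L(μ) is multiplicity-free if and only if λ + μ ≤ p - 1. -/
/-- The Weyl character `χ(ν) = Σ_{i=0}^{ν} e^{ν-2i}` of highest weight `ν` for `SL₂`,
in the group ring `ℤ[ℤ]`.  For `p`-restricted `ν` (i.e. `ν < p`) this is the character
of the irreducible module `L(ν)`, since `Δ(ν)` is then irreducible. -/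
noncomputable def chi (nu : ℕ) : AddMonoidAlgebra ℤ ℤ :=
  ∑ i ∈ Finset.range (nu + 1), AddMonoidAlgebra.single ((nu : ℤ) - 2 * i) (1 : ℤ)

/-- The Frobenius twist on characters: scales all weights by `p`. -/
noncomputable def frobTwist (p : ℕ) (f : AddMonoidAlgebra ℤ ℤ) : AddMonoidAlgebra ℤ ℤ :=
  AddMonoidAlgebra.ofCoeff (Finsupp.mapDomain (fun n : ℤ => (p : ℤ) * n) f.coeff)

/-- The character of the irreducible `SL₂`-module `L(ν)` in characteristic `p`:
by Steinberg's tensor product theorem, if `ν = Σ p^i νᵢ` with `νᵢ` the base-`p`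
digits of `ν`, then `ch L(ν) = Π_i (χ(νᵢ))^{(p^i)}` where `(p^i)` denotes the
`i`-fold Frobenius twist. -/
noncomputable def chL (p : ℕ) (nu : ℕ) : AddMonoidAlgebra ℤ ℤ :=
  ((Nat.digits p nu).mapIdx fun i d => (frobTwist p)^[i] (chi d)).prod

noncomputable def dd : AddMonoidAlgebra ℤ ℤ :=
  AddMonoidAlgebra.single 1 1 - AddMonoidAlgebra.single (-1) 1

lemma amasingle (a : ℤ) (b : ℤ) : (AddMonoidAlgebra.single a b : AddMonoidAlgebra ℤ ℤ).coeff = Finsupp.single a b := rfl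

lemma dd_ne_zero : dd ≠ 0 := by
  intro h
  have h1 : dd.coeff 1 = 0 := by rw [h]; rfl
  rw [dd, AddMonoidAlgebra.coeff_sub, amasingle, amasingle, Finsupp.sub_apply, Finsupp.single_eq_same,
    Finsupp.single_eq_of_ne' (by norm_num)] at h1
  norm_num at h1

lemma dd_mul_chi (n : ℕ) :
    dd * chi n = AddMonoidAlgebra.single ((n:ℤ)+1) 1
      - AddMonoidAlgebra.single (-((n:ℤ)+1)) 1 := by
  have h : ∀ i : ℕ, dd * AddMonoidAlgebra.single ((n:ℤ) - 2*i) 1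
      = AddMonoidAlgebra.single ((n:ℤ)+1-2*(i:ℤ)) 1
        - AddMonoidAlgebra.single ((n:ℤ)+1-2*((i+1 : ℕ):ℤ)) 1 := by
    intro i
    rw [dd, sub_mul, AddMonoidAlgebra.single_mul_single, AddMonoidAlgebra.single_mul_single]
    congr 2 <;> push_cast <;> ring
  rw [chi, Finset.mul_sum]
  simp only [h]
  rw [Finset.sum_range_sub' (fun i => AddMonoidAlgebra.single ((n:ℤ)+1-2*(i:ℤ)) 1)]
  congr 2 <;> push_cast <;> ring

lemma chi_mul_chi_of_le (a b : ℕ) (hba : b ≤ a) :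
    chi a * chi b = ∑ j ∈ Finset.range (b+1), chi (a + b - 2*j) := by
  apply mul_left_cancel₀ dd_ne_zero
  rw [← mul_assoc, dd_mul_chi a]
  have hcast : ∀ j ∈ Finset.range (b+1), dd * chi (a + b - 2*j)
      = AddMonoidAlgebra.single ((a:ℤ)+1+((b:ℤ)-2*(j:ℤ))) 1
        - AddMonoidAlgebra.single (-((a:ℤ)+1)+((b:ℤ)-2*((b:ℤ)-(j:ℤ)))) 1 := by
    intro j hj
    have hj' : j ≤ b := Nat.lt_succ_iff.mp (Finset.mem_range.mp hj)
    have h2 : 2*j ≤ a + b := by omega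
    rw [dd_mul_chi]
    congr 2 <;> push_cast [h2, hj'] <;> ring
  rw [Finset.mul_sum, Finset.sum_congr rfl hcast, Finset.sum_sub_distrib]
  rw [sub_mul, chi, Finset.mul_sum, Finset.mul_sum]
  simp only [AddMonoidAlgebra.single_mul_single, one_mul]
  congr 1
  rw [← Finset.sum_range_reflect
    (fun j => AddMonoidAlgebra.single (-((a:ℤ)+1)+((b:ℤ)-2*((b:ℤ)-(j:ℤ)))) 1) (b+1)]
  apply Finset.sum_congr rfl
  intro x hx
  have hx' : x ≤ b := Nat.lt_succ_iff.mp (Finset.mem_range.mp hx)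
  have h1 : b + 1 - 1 - x = b - x := by omega
  congr 1
  rw [h1, Nat.cast_sub hx']
  ring


def Bdd (f : AddMonoidAlgebra ℤ ℤ) (n : ℤ) : Prop :=
  (∀ w : ℤ, n < w → f.coeff w = 0) ∧ f.coeff n = 1

lemma bdd_one : Bdd 1 0 := by
  constructor
  · intro w hw
    rw [AddMonoidAlgebra.one_def, amasingle, Finsupp.single_eq_of_ne' (by omega)]
  · rw [AddMonoidAlgebra.one_def, amasingle, Finsupp.single_eq_same]

lemma chi_apply (d : ℕ) (w : ℤ) :
    (chi d).coeff w = ∑ i ∈ Finset.range (d+1), if (d:ℤ) - 2*i = w then 1 else 0 := by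
  rw [chi]
  rw [AddMonoidAlgebra.coeff_sum, Finset.sum_apply']
  apply Finset.sum_congr rfl
  intro i _
  rw [amasingle, Finsupp.single_apply]

lemma bdd_chi (d : ℕ) : Bdd (chi d) d := by
  constructor
  · intro w hw
    rw [chi_apply]
    apply Finset.sum_eq_zero
    intro i _
    rw [if_neg (by omega)]
  · rw [chi_apply]
    rw [Finset.sum_eq_single_of_mem 0 (by simp)]
    · simp
    · intro i _ hi
      rw [if_neg (by omega)]

lemma bdd_frob {p : ℕ} (hp : 0 < p) {f : AddMonoidAlgebra ℤ ℤ} {n : ℤ}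
    (h : Bdd f n) : Bdd (frobTwist p f) ((p:ℤ) * n) := by
  have hp' : (0:ℤ) < p := by exact_mod_cast hp
  have hinj : Function.Injective (fun x : ℤ => (p:ℤ) * x) :=
    fun x y hxy => by simpa using mul_left_cancel₀ (by omega : (p:ℤ) ≠ 0) hxy
  constructor
  · intro w hw
    by_cases hr : w ∈ Set.range (fun x : ℤ => (p:ℤ) * x)
    · obtain ⟨a, ha⟩ := hr
      simp only at ha
      subst ha
      rw [frobTwist, AddMonoidAlgebra.coeff_ofCoeff, Finsupp.mapDomain_apply hinj]
      exact h.1 a (by exact lt_of_mul_lt_mul_left (by simpa using hw) (le_of_lt hp'))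
    · exact Finsupp.mapDomain_notin_range _ _ hr
  · rw [frobTwist, AddMonoidAlgebra.coeff_ofCoeff, Finsupp.mapDomain_apply hinj]
    exact h.2

lemma bdd_frob_iter {p : ℕ} (hp : 0 < p) {f : AddMonoidAlgebra ℤ ℤ} {n : ℤ} (i : ℕ)
    (h : Bdd f n) : Bdd ((frobTwist p)^[i] f) ((p:ℤ)^i * n) := by
  induction i generalizing f n with
  | zero => simpa using h
  | succ k ih =>
    rw [Function.iterate_succ_apply]
    have h2 := ih (bdd_frob hp h)
    have h3 : (p:ℤ)^(k+1) * n = (p:ℤ)^k * ((p:ℤ)*n) := by ring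
    rw [h3]
    exact h2

lemma bdd_mul {f g : AddMonoidAlgebra ℤ ℤ} {a b : ℤ} (hf : Bdd f a) (hg : Bdd g b) :
    Bdd (f * g) (a + b) := by
  have hfs : ∀ x ∈ f.coeff.support, x ≤ a := by
    intro x hx
    by_contra hc
    exact Finsupp.mem_support_iff.mp hx (hf.1 x (by omega))
  have hgs : ∀ x ∈ g.coeff.support, x ≤ b := by
    intro x hx
    by_contra hc
    exact Finsupp.mem_support_iff.mp hx (hg.1 x (by omega))
  constructor
  · intro w hw
    classical
    rw [AddMonoidAlgebra.coeff_mul, Finsupp.sum]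
    apply Finset.sum_eq_zero
    intro x hx
    rw [Finsupp.sum]
    apply Finset.sum_eq_zero
    intro y hy
    rw [if_neg]
    have := hfs x hx; have := hgs y hy
    omega
  · classical
    rw [AddMonoidAlgebra.coeff_mul, Finsupp.sum]
    have haf : a ∈ f.coeff.support := Finsupp.mem_support_iff.mpr (by rw [hf.2]; norm_num)
    have hbg : b ∈ g.coeff.support := Finsupp.mem_support_iff.mpr (by rw [hg.2]; norm_num)
    rw [Finset.sum_eq_single_of_mem a haf]
    · rw [Finsupp.sum, Finset.sum_eq_single_of_mem b hbg]
      · rw [if_pos rfl, hf.2, hg.2, one_mul]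
      · intro y hy hyb
        rw [if_neg (by have := hgs y hy; omega)]
    · intro x hx hxa
      rw [Finsupp.sum]
      apply Finset.sum_eq_zero
      intro y hy
      rw [if_neg (by have := hfs x hx; have := hgs y hy; omega)]

lemma bdd_aux {p : ℕ} (hp : 0 < p) :
    ∀ (l : List ℕ) (k : ℕ),
      Bdd ((l.mapIdx fun i d => (frobTwist p)^[i + k] (chi d)).prod)
        ((p:ℤ)^k * ((Nat.ofDigits p l : ℕ) : ℤ)) := by
  intro l
  induction l with
  | nil => intro k; simpa [Nat.ofDigits_nil] using bdd_one
  | cons d t ih =>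
    intro k
    rw [List.mapIdx_cons, List.prod_cons]
    have h1 : Bdd ((frobTwist p)^[0 + k] (chi d)) ((p:ℤ)^k * d) := by
      simpa using bdd_frob_iter hp k (bdd_chi d)
    have h2 : (t.mapIdx fun i d => (frobTwist p)^[i + 1 + k] (chi d))
        = (t.mapIdx fun i d => (frobTwist p)^[i + (k+1)] (chi d)) := by
      congr 1
      funext i d
      congr 1
      omega
    have h3 := ih (k + 1)
    rw [← h2] at h3
    have hb : (p:ℤ)^k * ((Nat.ofDigits p (d :: t) : ℕ) : ℤ)
        = (p:ℤ)^k * d + (p:ℤ)^(k+1) * ((Nat.ofDigits p t : ℕ) : ℤ) := by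
      rw [Nat.ofDigits_cons]
      push_cast
      ring
    rw [hb]
    exact bdd_mul h1 h3

lemma bdd_chL {p : ℕ} (hp : 0 < p) (nu : ℕ) : Bdd (chL p nu) nu := by
  have h := bdd_aux hp (Nat.digits p nu) 0
  simp only [Nat.add_zero, pow_zero, one_mul, Nat.ofDigits_digits] at h
  rw [chL]
  exact h

lemma chi_mul_chi (a b : ℕ) :
    chi a * chi b = ∑ j ∈ Finset.range (min a b + 1), chi (a + b - 2*j) := by
  rcases le_total b a with h | h
  · rw [min_eq_right h]
    exact chi_mul_chi_of_le a b h
  · rw [min_eq_left h, mul_comm, Nat.add_comm a b]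
    exact chi_mul_chi_of_le b a h

lemma chL_eq_chi {p : ℕ} (hp : 1 < p) {nu : ℕ} (h : nu < p) : chL p nu = chi nu := by
  rcases Nat.eq_zero_or_pos nu with h0 | h0
  · subst h0
    rw [chL, Nat.digits_zero, List.mapIdx_nil, List.prod_nil, chi, Finset.sum_range_one]
    norm_num [AddMonoidAlgebra.one_def]
  · rw [chL, Nat.digits_def' hp h0, Nat.div_eq_of_lt h, Nat.mod_eq_of_lt h, Nat.digits_zero,
      List.mapIdx_cons, List.mapIdx_nil, List.prod_cons, List.prod_nil, mul_one,
      Function.iterate_zero_apply]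

lemma frob_chi_one {p : ℕ} (hp : 1 < p) :
    frobTwist p (chi 1)
      = AddMonoidAlgebra.single ((p:ℤ)) 1 + AddMonoidAlgebra.single (-(p:ℤ)) 1 := by
  have h1 : chi 1 = AddMonoidAlgebra.single (1:ℤ) 1 + AddMonoidAlgebra.single (-1:ℤ) 1 := by
    rw [chi]
    rw [Finset.sum_range_succ, Finset.sum_range_one]
    norm_num
  rw [frobTwist, h1, AddMonoidAlgebra.coeff_add, amasingle, amasingle, Finsupp.mapDomain_add,
    Finsupp.mapDomain_single, Finsupp.mapDomain_single, AddMonoidAlgebra.ofCoeff_add,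
    AddMonoidAlgebra.ofCoeff_single, AddMonoidAlgebra.ofCoeff_single]
  norm_num

lemma chi_split {p : ℕ} (hp : 1 < p) {nu : ℕ} (h1 : p ≤ nu) (h2 : nu ≤ 2*p - 2) :
    chi nu = chL p nu + chi (2*p - 2 - nu) := by
  -- digits p nu = [nu - p, 1]
  have hd : Nat.digits p nu = [nu - p, 1] := by
    rw [Nat.digits_def' hp (by omega)]
    have hm : nu % p = nu - p := by
      rw [Nat.mod_eq_sub_mod h1, Nat.mod_eq_of_lt (by omega)]
    have hdiv : nu / p = 1 := by
      rw [Nat.div_eq_of_lt_le] <;> omega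
    rw [hm, hdiv, Nat.digits_def' hp (by omega : 0 < 1), Nat.mod_eq_of_lt hp,
      Nat.div_eq_of_lt hp, Nat.digits_zero]
  rw [chL, hd]
  have hmap : ([nu - p, 1].mapIdx fun i d => (frobTwist p)^[i] (chi d)).prod
      = chi (nu - p) * frobTwist p (chi 1) := by
    rw [List.mapIdx_cons, List.mapIdx_cons, List.mapIdx_nil, List.prod_cons, List.prod_cons,
      List.prod_nil, mul_one, Function.iterate_zero_apply, Function.iterate_one]
  rw [hmap, frob_chi_one hp]
  -- now an identity of characters; multiply by dd
  apply mul_left_cancel₀ dd_ne_zero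
  rw [mul_add, dd_mul_chi, ← mul_assoc, dd_mul_chi, dd_mul_chi]
  rw [sub_mul, mul_add, mul_add]
  simp only [AddMonoidAlgebra.single_mul_single, one_mul]
  have c1 : ((nu - p : ℕ) : ℤ) = (nu : ℤ) - p := by
    push_cast [h1]; ring
  have c2 : ((2*p - 2 - nu : ℕ) : ℤ) = 2*(p:ℤ) - 2 - nu := by
    have : (2:ℕ) ≤ 2*p := by omega
    push_cast [h2, this]; ring
  rw [c1, c2]
  have e1 : (nu:ℤ) - (p:ℤ) + 1 + (p:ℤ) = (nu:ℤ) + 1 := by ring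
  rw [e1]
  ring_nf


noncomputable def Phi (p : ℕ) : (ℕ →₀ ℤ) →ₗ[ℤ] AddMonoidAlgebra ℤ ℤ :=
  Finsupp.linearCombination ℤ (chL p)

lemma Phi_single (p : ℕ) (nu : ℕ) : Phi p (Finsupp.single nu 1) = chL p nu := by
  rw [Phi, Finsupp.linearCombination_single, one_smul]

lemma Phi_zero_of {p : ℕ} (hp : 0 < p) (t : ℕ →₀ ℤ) (h : Phi p t = 0) : t = 0 := by
  by_contra ht
  have hne : t.support.Nonempty := Finsupp.support_nonempty_iff.mpr ht
  set N := t.support.max' hne with hNdef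
  have hN : N ∈ t.support := t.support.max'_mem hne
  have h2 : (Phi p t).coeff (N : ℤ) = 0 := by rw [h]; rfl
  rw [Phi, Finsupp.linearCombination_apply, AddMonoidAlgebra.coeff_finsuppSum, Finsupp.sum_apply] at h2
  rw [Finsupp.sum, Finset.sum_eq_single_of_mem N hN] at h2
  · rw [AddMonoidAlgebra.coeff_smul, Finsupp.smul_apply, (bdd_chL hp N).2, smul_eq_mul, mul_one] at h2
    exact Finsupp.mem_support_iff.mp hN h2
  · intro x hx hxN
    have hxle : x ≤ N := t.support.le_max' x hx
    rw [AddMonoidAlgebra.coeff_smul, Finsupp.smul_apply, (bdd_chL hp x).1 N (by exact_mod_cast lt_of_le_of_ne hxle hxN),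
      smul_eq_mul, mul_zero]

lemma Phi_injective {p : ℕ} (hp : 0 < p) : Function.Injective (Phi p) :=
  (injective_iff_map_eq_zero (Phi p)).mpr (Phi_zero_of hp)

/-- For `SL₂` over an algebraically closed field of characteristic `p`, with
`p`-restricted dominant weights `λ, μ` (identifying weights with ℕ, so `λ, μ < p`),
the tensor product `L(λ) ⊗ L(μ)` is multiplicity-free (equivalently: its character
is a sum of characters of pairwise distinct irreducibles) if and only if
`λ + μ ≤ p - 1`. -/
theorem SL2_multiplicityFree_iff (p : ℕ) (hp : p.Prime)
    (lam mu : ℕ) (hl : lam < p) (hm : mu < p) :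
    (∃ S : Finset ℕ, chL p lam * chL p mu = ∑ ν ∈ S, chL p ν) ↔ lam + mu ≤ p - 1 := by
  have hp1 : 1 < p := hp.one_lt
  have hp0 : 0 < p := hp.pos
  constructor
  · -- reverse: multiplicity-free decomposition implies lam + mu ≤ p - 1
    rintro ⟨S, hS⟩
    by_contra hgt
    have hple : p ≤ lam + mu := by omega
    have hub : lam + mu ≤ 2*p - 2 := by omega
    set m := lam + mu with hm_def
    set mn := min lam mu with hmn_def
    set w := 2*p - 2 - m with hw_def
    set j₀ := m - p + 1 with hj0_def
    -- the true coefficient finsupp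
    set c : ℕ →₀ ℤ := ∑ j ∈ Finset.range (mn+1),
      (if p ≤ m - 2*j then Finsupp.single (m - 2*j) 1 + Finsupp.single (2*p - 2 - (m - 2*j)) 1
       else Finsupp.single (m - 2*j) (1:ℤ)) with hc_def
    set s : ℕ →₀ ℤ := ∑ ν ∈ S, Finsupp.single ν (1:ℤ) with hs_def
    have hPhic : Phi p c = chi lam * chi mu := by
      rw [hc_def, map_sum, chi_mul_chi]
      apply Finset.sum_congr rfl
      intro j hj
      have hj' : j ≤ mn := Nat.lt_succ_iff.mp (Finset.mem_range.mp hj)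
      by_cases hcase : p ≤ m - 2*j
      · rw [if_pos hcase, map_add, Phi_single, Phi_single]
        rw [chi_split hp1 hcase (by omega), chL_eq_chi hp1 (by omega : 2*p - 2 - (m - 2*j) < p)]
      · rw [if_neg hcase, Phi_single, chL_eq_chi hp1 (by omega)]
    have hPhis : Phi p s = chi lam * chi mu := by
      rw [hs_def, map_sum]
      simp only [Phi_single]
      rw [← hS, chL_eq_chi hp1 hl, chL_eq_chi hp1 hm]
    have hcs : c = s := Phi_injective hp0 (by rw [hPhic, hPhis])
    -- evaluate at w
    have hcw : (2:ℤ) ≤ c w := by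
      rw [hc_def]
      have h0mem : 0 ∈ Finset.range (mn+1) := by simp
      have hj0mem : j₀ ∈ Finset.range (mn+1) := by
        rw [Finset.mem_range]; omega
      have hj0ne : j₀ ≠ 0 := by omega
      rw [Finset.sum_apply']
      rw [← Finset.add_sum_erase _ _ h0mem,
        ← Finset.add_sum_erase _ _ (Finset.mem_erase.mpr ⟨hj0ne, hj0mem⟩)]
      have ht1 : (if p ≤ m - 2*0 then Finsupp.single (m - 2*0) 1 + Finsupp.single (2*p - 2 - (m - 2*0)) 1
          else Finsupp.single (m - 2*0) (1:ℤ)) w = 1 := by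
        rw [if_pos (by omega)]
        rw [Finsupp.add_apply, Finsupp.single_apply, Finsupp.single_apply,
          if_neg (by omega), if_pos (by omega)]
        norm_num
      have ht2 : (if p ≤ m - 2*j₀ then Finsupp.single (m - 2*j₀) 1 + Finsupp.single (2*p - 2 - (m - 2*j₀)) 1
          else Finsupp.single (m - 2*j₀) (1:ℤ)) w = 1 := by
        rw [if_neg (by omega)]
        rw [Finsupp.single_apply, if_pos (by omega)]
      rw [ht1, ht2]
      have hrest : (0:ℤ) ≤ ∑ j ∈ ((Finset.range (mn+1)).erase 0).erase j₀,
          (if p ≤ m - 2*j then Finsupp.single (m - 2*j) 1 + Finsupp.single (2*p - 2 - (m - 2*j)) 1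
           else Finsupp.single (m - 2*j) (1:ℤ)) w := by
        apply Finset.sum_nonneg
        intro j hj
        split_ifs
        · rw [Finsupp.add_apply, Finsupp.single_apply, Finsupp.single_apply]
          split_ifs <;> norm_num
        · rw [Finsupp.single_apply]
          split_ifs <;> norm_num
      linarith
    have hsw : s w ≤ 1 := by
      rw [hs_def, Finset.sum_apply']
      simp only [Finsupp.single_apply]
      rw [Finset.sum_ite_eq' S w (fun _ => (1:ℤ))]
      split_ifs <;> norm_num
    rw [hcs] at hcw
    linarith
  · -- forward direction
    intro h
    refine ⟨(Finset.range (min lam mu + 1)).image (fun j => lam + mu - 2*j), ?_⟩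
    rw [Finset.sum_image]
    · rw [chL_eq_chi hp1 hl, chL_eq_chi hp1 hm, chi_mul_chi]
      apply Finset.sum_congr rfl
      intro j hj
      have hj' : j ≤ min lam mu := Nat.lt_succ_iff.mp (Finset.mem_range.mp hj)
      rw [chL_eq_chi hp1 (by omega : lam + mu - 2*j < p)]
    · intro x hx y hy hxy
      have hx' : x ≤ min lam mu := Nat.lt_succ_iff.mp (Finset.mem_range.mp hx)
      have hy' : y ≤ min lam mu := Nat.lt_succ_iff.mp (Finset.mem_range.mp hy)
      simp only at hxy
      omega
end

section
/- Weyl character product decomposition for A2: for dominant weights λ = (a,0) and μ = (c,d) of SL₃, χ(λ)·χ(μ) = Σ_{i=0}^{a} Σ_{j=max{0,i-c}}^{min{i,d}} χ(λ + μ − iα₁ − jα₂), and all weights appearing in the sum are dominant. -/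
/-- `e x` is the basis element `e^x` of the group ring `ℤ[X]` for the A2 weight
lattice `X = ℤ × ℤ` (coordinates in the fundamental weights `ω₁, ω₂`). -/
noncomputable def eA2 (x : ℤ × ℤ) : AddMonoidAlgebra ℤ (ℤ × ℤ) :=
  AddMonoidAlgebra.single x 1

/-- The Weyl numerator `A(λ) = Σ_{w ∈ W} det(w) e^{w(λ+ρ)}` for A2, `ρ = (1,1)`. -/
noncomputable def A2num (l : ℤ × ℤ) : AddMonoidAlgebra ℤ (ℤ × ℤ) :=
  let x := l.1 + 1
  let y := l.2 + 1
  eA2 (x, y) - eA2 (-x, x + y) - eA2 (x + y, -y)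
    + eA2 (-(x + y), x) + eA2 (y, -(x + y)) - eA2 (-y, -x)

/-- `χ` satisfies Weyl's character formula for A2: `A(0) * χ(λ) = A(λ)`. -/
def IsWeylCharA2 (χ : ℤ × ℤ → AddMonoidAlgebra ℤ (ℤ × ℤ)) : Prop :=
  ∀ l : ℤ × ℤ, A2num (0, 0) * χ l = A2num l

lemma eA2_mul (x y : ℤ × ℤ) : eA2 x * eA2 y = eA2 (x + y) := by
  simp [eA2, AddMonoidAlgebra.single_mul_single]

lemma eA2_congr' {x1 y1 x2 y2 : ℤ} (h1 : x1 = x2) (h2 : y1 = y2) :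
    eA2 (x1, y1) = eA2 (x2, y2) := by rw [h1, h2]

lemma A2num_s1 (x y : ℤ) : A2num (-x - 2, x + y + 1) = -A2num (x, y) := by
  simp only [A2num]; ring_nf

lemma A2num_s2 (x y : ℤ) : A2num (x + y + 1, -y - 2) = -A2num (x, y) := by
  simp only [A2num]; ring_nf

lemma A2num_wall1 (y : ℤ) : A2num (-1, y) = 0 := by simp only [A2num]; ring_nf

lemma A2num_wall2 (x : ℤ) : A2num (x, -1) = 0 := by simp only [A2num]; ring_nf

lemma A2num_ne : A2num (0, 0) ≠ 0 := by
  intro h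
  have h2 : (A2num (0, 0)).coeff (1, 1) = 0 := by rw [h]; rfl
  rw [A2num] at h2
  simp only [eA2, AddMonoidAlgebra.coeff_sub, AddMonoidAlgebra.coeff_add,
    AddMonoidAlgebra.coeff_single] at h2
  rw [Finsupp.sub_apply, Finsupp.add_apply, Finsupp.add_apply, Finsupp.sub_apply,
    Finsupp.sub_apply] at h2
  simp [Finsupp.single_apply, Prod.ext_iff] at h2

def Ta (a : ℕ) : Finset (ℕ × ℕ) :=
  (Finset.range (a + 1) ×ˢ Finset.range (a + 1)).filter fun p => p.2 ≤ p.1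

lemma mem_Ta {a : ℕ} {p : ℕ × ℕ} : p ∈ Ta a ↔ p.2 ≤ p.1 ∧ p.1 ≤ a := by
  simp only [Ta, Finset.mem_filter, Finset.mem_product, Finset.mem_range, Nat.lt_succ_iff]
  omega

noncomputable def Xa (a : ℕ) : AddMonoidAlgebra ℤ (ℤ × ℤ) :=
  ∑ p ∈ Ta a, eA2 ((a : ℤ) - 2 * p.1 + p.2, (p.1 : ℤ) - 2 * p.2)

lemma step1 (a : ℕ) (c d : ℤ) :
    Xa a * A2num (c, d) =
      ∑ p ∈ Ta a, A2num (c + (a : ℤ) - 2 * p.1 + p.2, d + (p.1 : ℤ) - 2 * p.2) := by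
  rw [Xa, Finset.sum_mul]
  simp only [A2num, mul_sub, mul_add, eA2_mul, Prod.mk_add_mk]
  simp only [Finset.sum_sub_distrib, Finset.sum_add_distrib]
  congr 1
  congr 1
  congr 1
  congr 1
  congr 1
  -- goal 1: identity
  · exact Finset.sum_congr rfl fun p hp => eA2_congr' (by ring) (by ring)
  -- goal 2: s1,  σ p = (a - p.1 + p.2, p.2)
  · refine Finset.sum_nbij' (fun p => (a - p.1 + p.2, p.2)) (fun p => (a - p.1 + p.2, p.2))
      ?_ ?_ ?_ ?_ ?_
    · intro p hp; have h := mem_Ta.mp hp; obtain ⟨i, j⟩ := p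
      rw [mem_Ta]; dsimp only at h ⊢; omega
    · intro p hp; have h := mem_Ta.mp hp; obtain ⟨i, j⟩ := p
      rw [mem_Ta]; dsimp only at h ⊢; omega
    · intro p hp; have h := mem_Ta.mp hp; obtain ⟨i, j⟩ := p
      dsimp only at h ⊢; refine Prod.ext ?_ ?_ <;> dsimp only <;> omega
    · intro p hp; have h := mem_Ta.mp hp; obtain ⟨i, j⟩ := p
      dsimp only at h ⊢; refine Prod.ext ?_ ?_ <;> dsimp only <;> omega
    · intro p hp; have h := mem_Ta.mp hp; obtain ⟨i, j⟩ := p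
      dsimp only at h ⊢; exact eA2_congr' (by omega) (by omega)
  -- goal 3: s2, σ p = (p.1, p.1 - p.2)
  · refine Finset.sum_nbij' (fun p => (p.1, p.1 - p.2)) (fun p => (p.1, p.1 - p.2))
      ?_ ?_ ?_ ?_ ?_
    · intro p hp; have h := mem_Ta.mp hp; obtain ⟨i, j⟩ := p
      rw [mem_Ta]; dsimp only at h ⊢; omega
    · intro p hp; have h := mem_Ta.mp hp; obtain ⟨i, j⟩ := p
      rw [mem_Ta]; dsimp only at h ⊢; omega
    · intro p hp; have h := mem_Ta.mp hp; obtain ⟨i, j⟩ := p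
      dsimp only at h ⊢; refine Prod.ext ?_ ?_ <;> dsimp only <;> omega
    · intro p hp; have h := mem_Ta.mp hp; obtain ⟨i, j⟩ := p
      dsimp only at h ⊢; refine Prod.ext ?_ ?_ <;> dsimp only <;> omega
    · intro p hp; have h := mem_Ta.mp hp; obtain ⟨i, j⟩ := p
      dsimp only at h ⊢; exact eA2_congr' (by omega) (by omega)
  -- goal 4: σ p = (a - p.1 + p.2, a - p.1), τ p = (a - p.2, p.1 - p.2)
  · refine Finset.sum_nbij' (fun p => (a - p.1 + p.2, a - p.1)) (fun p => (a - p.2, p.1 - p.2))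
      ?_ ?_ ?_ ?_ ?_
    · intro p hp; have h := mem_Ta.mp hp; obtain ⟨i, j⟩ := p
      rw [mem_Ta]; dsimp only at h ⊢; omega
    · intro p hp; have h := mem_Ta.mp hp; obtain ⟨i, j⟩ := p
      rw [mem_Ta]; dsimp only at h ⊢; omega
    · intro p hp; have h := mem_Ta.mp hp; obtain ⟨i, j⟩ := p
      dsimp only at h ⊢; refine Prod.ext ?_ ?_ <;> dsimp only <;> omega
    · intro p hp; have h := mem_Ta.mp hp; obtain ⟨i, j⟩ := p
      dsimp only at h ⊢; refine Prod.ext ?_ ?_ <;> dsimp only <;> omega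
    · intro p hp; have h := mem_Ta.mp hp; obtain ⟨i, j⟩ := p
      dsimp only at h ⊢; exact eA2_congr' (by omega) (by omega)
  -- goal 5: σ p = (a - p.2, p.1 - p.2), τ p = (a - p.1 + p.2, a - p.1)
  · refine Finset.sum_nbij' (fun p => (a - p.2, p.1 - p.2)) (fun p => (a - p.1 + p.2, a - p.1))
      ?_ ?_ ?_ ?_ ?_
    · intro p hp; have h := mem_Ta.mp hp; obtain ⟨i, j⟩ := p
      rw [mem_Ta]; dsimp only at h ⊢; omega
    · intro p hp; have h := mem_Ta.mp hp; obtain ⟨i, j⟩ := p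
      rw [mem_Ta]; dsimp only at h ⊢; omega
    · intro p hp; have h := mem_Ta.mp hp; obtain ⟨i, j⟩ := p
      dsimp only at h ⊢; refine Prod.ext ?_ ?_ <;> dsimp only <;> omega
    · intro p hp; have h := mem_Ta.mp hp; obtain ⟨i, j⟩ := p
      dsimp only at h ⊢; refine Prod.ext ?_ ?_ <;> dsimp only <;> omega
    · intro p hp; have h := mem_Ta.mp hp; obtain ⟨i, j⟩ := p
      dsimp only at h ⊢; exact eA2_congr' (by omega) (by omega)
  -- goal 6: σ p = (a - p.2, a - p.1)
  · refine Finset.sum_nbij' (fun p => (a - p.2, a - p.1)) (fun p => (a - p.2, a - p.1))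
      ?_ ?_ ?_ ?_ ?_
    · intro p hp; have h := mem_Ta.mp hp; obtain ⟨i, j⟩ := p
      rw [mem_Ta]; dsimp only at h ⊢; omega
    · intro p hp; have h := mem_Ta.mp hp; obtain ⟨i, j⟩ := p
      rw [mem_Ta]; dsimp only at h ⊢; omega
    · intro p hp; have h := mem_Ta.mp hp; obtain ⟨i, j⟩ := p
      dsimp only at h ⊢; refine Prod.ext ?_ ?_ <;> dsimp only <;> omega
    · intro p hp; have h := mem_Ta.mp hp; obtain ⟨i, j⟩ := p
      dsimp only at h ⊢; refine Prod.ext ?_ ?_ <;> dsimp only <;> omega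
    · intro p hp; have h := mem_Ta.mp hp; obtain ⟨i, j⟩ := p
      dsimp only at h ⊢; exact eA2_congr' (by omega) (by omega)

lemma step2 (a c d : ℕ) :
    ∑ p ∈ Ta a, A2num ((c : ℤ) + a - 2 * p.1 + p.2, (d : ℤ) + p.1 - 2 * p.2) =
      ∑ p ∈ (Ta a).filter (fun p => p.1 - c ≤ p.2 ∧ p.2 ≤ d),
        A2num ((c : ℤ) + a - 2 * p.1 + p.2, (d : ℤ) + p.1 - 2 * p.2) := by
  classical
  rw [← Finset.sum_filter_add_sum_filter_not (Ta a) (fun p => p.1 - c ≤ p.2 ∧ p.2 ≤ d)]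
  have hz : ∑ p ∈ (Ta a).filter (fun p => ¬(p.1 - c ≤ p.2 ∧ p.2 ≤ d)),
      A2num ((c : ℤ) + a - 2 * p.1 + p.2, (d : ℤ) + p.1 - 2 * p.2) = 0 := by
    refine Finset.sum_involution
      (fun p _ => if d < p.2 then (p.1, d + 1 + p.1 - p.2) else (a + c + 1 + p.2 - p.1, p.2))
      ?_ ?_ ?_ ?_
    · intro p hp; obtain ⟨i, j⟩ := p
      simp only [Finset.mem_filter, mem_Ta] at hp
      try dsimp only at hp ⊢
      by_cases hd : d < j
      · rw [if_pos hd]; try dsimp only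
        have h1 : ((c : ℤ) + a - 2 * i + (d + 1 + i - j : ℕ)) =
            ((c : ℤ) + a - 2 * i + j) + ((d : ℤ) + i - 2 * j) + 1 := by omega
        have h2 : ((d : ℤ) + i - 2 * (d + 1 + i - j : ℕ)) = -((d : ℤ) + i - 2 * j) - 2 := by
          omega
        rw [h1, h2, A2num_s2]; ring
      · rw [if_neg hd]; try dsimp only
        have h1 : ((c : ℤ) + a - 2 * (a + c + 1 + j - i : ℕ) + j) =
            -((c : ℤ) + a - 2 * i + j) - 2 := by omega
        have h2 : ((d : ℤ) + (a + c + 1 + j - i : ℕ) - 2 * j) =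
            ((c : ℤ) + a - 2 * i + j) + ((d : ℤ) + i - 2 * j) + 1 := by omega
        rw [h1, h2, A2num_s1]; ring
    · intro p hp hne heq; obtain ⟨i, j⟩ := p
      simp only [Finset.mem_filter, mem_Ta] at hp
      dsimp only at hp heq
      apply hne
      by_cases hd : d < j
      · rw [if_pos hd] at heq
        have hj : d + 1 + i - j = j := (Prod.mk.injEq _ _ _ _ ▸ heq).2
        have h2 : ((d : ℤ) + i - 2 * j) = -1 := by omega
        rw [h2]; exact A2num_wall2 _
      · rw [if_neg hd] at heq
        have hi : a + c + 1 + j - i = i := (Prod.mk.injEq _ _ _ _ ▸ heq).1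
        have h1 : ((c : ℤ) + a - 2 * i + j) = -1 := by omega
        rw [h1]; exact A2num_wall1 _
    · intro p hp; obtain ⟨i, j⟩ := p
      simp only [Finset.mem_filter, mem_Ta] at hp ⊢
      try dsimp only at hp ⊢
      by_cases hd : d < j
      · rw [if_pos hd]; try dsimp only
        omega
      · rw [if_neg hd]; try dsimp only
        omega
    · intro p hp; obtain ⟨i, j⟩ := p
      simp only [Finset.mem_filter, mem_Ta] at hp
      try dsimp only at hp ⊢
      by_cases hd : d < j
      · rw [if_pos hd]; try dsimp only
        rw [if_pos (show d < d + 1 + i - j by omega)]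
        refine Prod.ext ?_ ?_ <;> dsimp only <;> omega
      · rw [if_neg hd]; try dsimp only
        rw [if_neg (show ¬ d < j by omega)]
        refine Prod.ext ?_ ?_ <;> dsimp only <;> omega
  rw [hz, add_zero]

lemma sum_S (a c d : ℕ) (f : ℕ × ℕ → AddMonoidAlgebra ℤ (ℤ × ℤ)) :
    ∑ p ∈ (Ta a).filter (fun p => p.1 - c ≤ p.2 ∧ p.2 ≤ d), f p =
      ∑ i ∈ Finset.range (a + 1), ∑ j ∈ Finset.Icc (i - c) (min i d), f (i, j) := by
  classical
  rw [Ta, Finset.filter_filter, Finset.sum_filter, Finset.sum_product]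
  refine Finset.sum_congr rfl fun i hi => ?_
  rw [Finset.mem_range, Nat.lt_succ_iff] at hi
  rw [← Finset.sum_filter]
  refine Finset.sum_congr ?_ fun j _ => rfl
  ext j
  simp only [Finset.mem_filter, Finset.mem_range, Finset.mem_Icc, Nat.lt_succ_iff,
    le_min_iff]
  omega

lemma key (a c d : ℕ) :
    Xa a * A2num ((c : ℤ), (d : ℤ)) =
      ∑ i ∈ Finset.range (a + 1), ∑ j ∈ Finset.Icc (i - c) (min i d),
        A2num ((a : ℤ) + (c : ℤ) - 2 * i + j, (d : ℤ) + i - 2 * j) := by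
  rw [step1 a c d, step2 a c d,
    sum_S a c d (fun p => A2num ((c : ℤ) + a - 2 * p.1 + p.2, (d : ℤ) + p.1 - 2 * p.2))]
  refine Finset.sum_congr rfl fun i _ => Finset.sum_congr rfl fun j _ => ?_
  exact congrArg A2num (Prod.ext (by dsimp only; try ring) (by dsimp only; try ring))

lemma Xa_A0 (a : ℕ) : Xa a * A2num (0, 0) = A2num ((a : ℤ), 0) := by
  have h := key a 0 0
  simp only [Nat.cast_zero] at h
  rw [h]
  rw [Finset.sum_eq_single_of_mem 0 (by simp)]
  · norm_num
  · intro i _ hi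
    have he : Finset.Icc (i - 0) (min i 0) = ∅ := by
      apply Finset.Icc_eq_empty
      rw [Nat.min_zero]
      omega
    rw [he, Finset.sum_empty]

/-- Weyl character product decomposition for A2: for dominant weights `λ = (a,0)`
and `μ = (c,d)` of SL₃ (with `α₁ = (2,-1)`, `α₂ = (-1,2)` in fundamental-weight
coordinates), `χ(λ)·χ(μ) = Σ_{i=0}^{a} Σ_{j=max{0,i-c}}^{min{i,d}} χ(λ + μ − iα₁ − jα₂)`,
and all weights appearing in the sum are dominant. -/
theorem A2_product_a0_cd (χ : ℤ × ℤ → AddMonoidAlgebra ℤ (ℤ × ℤ))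
    (hχ : IsWeylCharA2 χ) (a c d : ℕ) :
    (χ ((a : ℤ), 0) * χ ((c : ℤ), (d : ℤ)) =
        ∑ i ∈ Finset.range (a + 1), ∑ j ∈ Finset.Icc (i - c) (min i d),
          χ ((a : ℤ) + (c : ℤ) - 2 * i + j, (d : ℤ) + i - 2 * j)) ∧
    (∀ i ∈ Finset.range (a + 1), ∀ j ∈ Finset.Icc (i - c) (min i d),
        0 ≤ (a : ℤ) + (c : ℤ) - 2 * i + j ∧ 0 ≤ (d : ℤ) + i - 2 * j) := by
  constructor
  · apply mul_left_cancel₀ A2num_ne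
    calc A2num (0, 0) * (χ ((a : ℤ), 0) * χ ((c : ℤ), (d : ℤ)))
        = (A2num (0, 0) * χ ((a : ℤ), 0)) * χ ((c : ℤ), (d : ℤ)) := by ring
      _ = A2num ((a : ℤ), 0) * χ ((c : ℤ), (d : ℤ)) := by rw [hχ]
      _ = (Xa a * A2num (0, 0)) * χ ((c : ℤ), (d : ℤ)) := by rw [Xa_A0]
      _ = Xa a * (A2num (0, 0) * χ ((c : ℤ), (d : ℤ))) := by ring
      _ = Xa a * A2num ((c : ℤ), (d : ℤ)) := by rw [hχ]
      _ = ∑ i ∈ Finset.range (a + 1), ∑ j ∈ Finset.Icc (i - c) (min i d),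
            A2num ((a : ℤ) + (c : ℤ) - 2 * i + j, (d : ℤ) + i - 2 * j) := key a c d
      _ = ∑ i ∈ Finset.range (a + 1), ∑ j ∈ Finset.Icc (i - c) (min i d),
            A2num (0, 0) * χ ((a : ℤ) + (c : ℤ) - 2 * i + j, (d : ℤ) + i - 2 * j) := by
          exact Finset.sum_congr rfl fun i _ => Finset.sum_congr rfl fun j _ => (hχ _).symm
      _ = A2num (0, 0) * ∑ i ∈ Finset.range (a + 1), ∑ j ∈ Finset.Icc (i - c) (min i d),
            χ ((a : ℤ) + (c : ℤ) - 2 * i + j, (d : ℤ) + i - 2 * j) := by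
          rw [Finset.mul_sum]
          exact Finset.sum_congr rfl fun i _ => (Finset.mul_sum _ _ _).symm
  · intro i hi j hj
    rw [Finset.mem_range, Nat.lt_succ_iff] at hi
    rw [Finset.mem_Icc, le_min_iff] at hj
    constructor <;> omega
end
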